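/- Let G be a connected linear algebraic group over an algebraically closed field of characteristic zero that is not simple, so G contains a connected normal algebraic subgroup K of positive dimension. Let T ≅ G_m be a one-dimensional torus contained in K, let X be a nontrivial representation of G/K (on which T acts trivially), and let Y be a finite-dimensional G-module on which K (hence T) acts faithfully, with highest T-weight d > 0. Then Y ⊗ Y is not a subquotient of any G-submodule of T(X) ⊗ Y. (Weight argument: the highest T-weight occurring in T(X) ⊗ Y is d, while the highest T-weight in Y ⊗ Y is 2d.) -/

import Mathlib

open scoped TensorProduct DirectSum

/-- The induced endomorphism `f^{⊗p}` of the `p`-th tensor power. -/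
noncomputable def tpowMap {K M : Type*} [CommSemiring K] [AddCommMonoid M] [Module K M]
    (f : M →ₗ[K] M) (p : ℕ) : (⨂[K]^p M) →ₗ[K] ⨂[K]^p M :=
  PiTensorProduct.map (fun _ => f)

/-- The truncated tensor algebra `⊕_{p < N} M^{⊗p}`. -/
noncomputable abbrev TruncTensorAlg (K M : Type*) [CommSemiring K] [AddCommMonoid M]
    [Module K M] (N : ℕ) : Type _ :=
  ⨁ p : Fin N, ⨂[K]^(p : ℕ) M

/-- The endomorphism `⊕_p f^{⊗p}` of the truncated tensor algebra. -/
noncomputable def truncTensorAlgMap {K M : Type*} [CommSemiring K] [AddCommMonoid M]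
    [Module K M] (f : M →ₗ[K] M) (N : ℕ) :
    TruncTensorAlg K M N →ₗ[K] TruncTensorAlg K M N :=
  DirectSum.toModule K (Fin N) _
    (fun p => (DirectSum.lof K (Fin N) (fun q : Fin N => ⨂[K]^(q : ℕ) M) p).comp
      (tpowMap f (p : ℕ)))

/-- `Z` is an equivariant subquotient of `M`. -/
def IsSubquotientRep {K G M Z : Type*} [Field K] [AddCommGroup M] [Module K M]
    [AddCommGroup Z] [Module K Z]
    (actM : G → M →ₗ[K] M) (actZ : G → Z →ₗ[K] Z) : Prop :=
  ∃ U S : Submodule K M, S ≤ U ∧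
    (∀ g : G, ∀ x ∈ U, actM g x ∈ U) ∧ (∀ g : G, ∀ x ∈ S, actM g x ∈ S) ∧
    ∃ φ : U →ₗ[K] Z, Function.Surjective φ ∧
      (∀ x : U, φ x = 0 ↔ (x : M) ∈ S) ∧
      ∀ g : G, ∀ x y : U, actM g (x : M) = (y : M) → φ y = actZ g (φ x)

open Polynomial in
lemma eig_pow' {k M : Type*} [CommSemiring k] [AddCommMonoid M] [Module k M]
    {A : Module.End k M} {c : k} {v : M} (h : A v = c • v) (n : ℕ) :
    (A ^ n) v = c ^ n • v := by
  induction n with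
  | zero => simp
  | succ n ih =>
      rw [pow_succ, pow_succ, Module.End.mul_apply, h, map_smul, ih, smul_smul, mul_comm]

open Polynomial in
lemma eig_aeval' {k M : Type*} [CommSemiring k] [AddCommMonoid M] [Module k M]
    {A : Module.End k M} {c : k} {v : M} (h : A v = c • v) (p : k[X]) :
    (Polynomial.aeval A p) v = p.eval c • v := by
  rw [Polynomial.aeval_eq_sum_range, Polynomial.eval_eq_sum_range, LinearMap.sum_apply,
    Finset.sum_smul]
  refine Finset.sum_congr rfl fun i _ => ?_
  rw [LinearMap.smul_apply, eig_pow' h, smul_smul, mul_smul]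

lemma semiconj_pow' {k M N : Type*} [CommSemiring k] [AddCommMonoid M] [Module k M]
    [AddCommMonoid N] [Module k N]
    {A : Module.End k M} {B : Module.End k N} {φ : M →ₗ[k] N}
    (h : ∀ x, φ (A x) = B (φ x)) (n : ℕ) (x : M) :
    φ ((A ^ n) x) = (B ^ n) (φ x) := by
  induction n with
  | zero => simp
  | succ n ih => rw [pow_succ', pow_succ', Module.End.mul_apply, Module.End.mul_apply, h, ih]

open Polynomial in
lemma semiconj_aeval' {k M N : Type*} [CommSemiring k] [AddCommMonoid M] [Module k M]
    [AddCommMonoid N] [Module k N]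
    {A : Module.End k M} {B : Module.End k N} {φ : M →ₗ[k] N}
    (h : ∀ x, φ (A x) = B (φ x)) (p : k[X]) (x : M) :
    φ ((Polynomial.aeval A p) x) = (Polynomial.aeval B p) (φ x) := by
  rw [Polynomial.aeval_eq_sum_range, Polynomial.aeval_eq_sum_range, LinearMap.sum_apply,
    LinearMap.sum_apply, map_sum]
  refine Finset.sum_congr rfl fun i _ => ?_
  rw [LinearMap.smul_apply, LinearMap.smul_apply, map_smul, semiconj_pow' h]

lemma truncTensorAlgMap_id' {K M : Type*} [CommSemiring K] [AddCommMonoid M] [Module K M]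
    (N : ℕ) : truncTensorAlgMap (LinearMap.id : M →ₗ[K] M) N = LinearMap.id := by
  refine DirectSum.linearMap_ext _ fun i => ?_
  ext x
  simp [truncTensorAlgMap, tpowMap, PiTensorProduct.map_id, DirectSum.toModule_lof]

lemma two_zpow_eq_one' {k : Type*} [Field k] [CharZero k] {m : ℤ}
    (h : (Units.mk0 (2 : k) two_ne_zero) ^ m = 1) : m = 0 := by
  have key : ∀ n : ℕ, (Units.mk0 (2 : k) two_ne_zero) ^ (n : ℤ) = 1 → n = 0 := by
    intro n hn
    rw [zpow_natCast] at hn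
    have : ((2 : k)) ^ n = 1 := by
      have := congrArg Units.val hn
      simpa using this
    have h2 : (((2 ^ n : ℕ) : k)) = ((1 : ℕ) : k) := by push_cast; simpa using this
    have h3 : 2 ^ n = 1 := Nat.cast_inj.mp h2
    by_contra hn0
    exact absurd ((pow_eq_one_iff_left hn0).mp h3) (by norm_num)
  rcases le_or_gt 0 m with hm | hm
  · obtain ⟨n, rfl⟩ := Int.eq_ofNat_of_zero_le hm
    simpa using key n h
  · obtain ⟨n, rfl⟩ : ∃ n : ℕ, m = -(n : ℤ) := ⟨m.natAbs, by omega⟩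
    rw [zpow_neg, inv_eq_one] at h
    simpa using key n h
/-- weight argument.  Let `G` be a (non-simple) group with a
nontrivial normal subgroup `K'`, `t : G_m → K'` a one-dimensional torus, `X` a
representation of `G` on which `K'` acts trivially and `Y` a finite-dimensional
`G`-module on which `K'` acts faithfully, with `T`-weight decomposition
`Y = ⊕ Y_j` of highest weight `d > 0`.  Then `Y ⊗ Y` is not a subquotient of
(any `G`-submodule of) `T(X) ⊗ Y`. -/
theorem tensor_square_not_subquotient_of_tensor_algebra_tensor
    {k : Type*} [Field k] [IsAlgClosed k] [CharZero k]
    {G : Type*} [Group G] (K' : Subgroup G) [K'.Normal] (hK' : K' ≠ ⊥)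
    (t : kˣ →* G) (htinj : Function.Injective t) (htK' : ∀ s : kˣ, t s ∈ K')
    {X Y : Type*} [AddCommGroup X] [Module k X] [FiniteDimensional k X]
    [AddCommGroup Y] [Module k Y] [FiniteDimensional k Y]
    (ρX : G →* (X →ₗ[k] X)ˣ) (ρY : G →* (Y →ₗ[k] Y)ˣ)
    (hXtrivial : ∀ x ∈ K', ρX x = 1)
    (hYfaithful : ∀ x ∈ K', ρY x = 1 → x = 1)
    (Yw : ℤ → Submodule k Y) (hYint : DirectSum.IsInternal Yw)
    (hwt : ∀ j : ℤ, ∀ y ∈ Yw j, ∀ s : kˣ,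
      (ρY (t s) : Y →ₗ[k] Y) y = ((s ^ j : kˣ) : k) • y)
    (d : ℕ) (hd : 0 < d)
    (hbound : ∀ j : ℤ, (d : ℤ) < |j| → Yw j = ⊥)
    (htop : Yw (d : ℤ) ≠ ⊥ ∨ Yw (-(d : ℤ)) ≠ ⊥) :
    ∀ N : ℕ,
      ¬ IsSubquotientRep
          (M := (TruncTensorAlg k X N) ⊗[k] Y) (Z := Y ⊗[k] Y)
          (fun g : G =>
            TensorProduct.map (truncTensorAlgMap (ρX g : X →ₗ[k] X) N)
              (ρY g : Y →ₗ[k] Y))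
          (fun g : G =>
            TensorProduct.map (ρY g : Y →ₗ[k] Y) (ρY g : Y →ₗ[k] Y)) := by
  intro N hsub
  classical
  obtain ⟨U, S, hSU, hUinv, _hSinv, φ, hφsurj, hker, hequiv⟩ := hsub
  obtain ⟨e, hee, hYe⟩ : ∃ e : ℤ, (e = (d : ℤ) ∨ e = -(d : ℤ)) ∧ Yw e ≠ ⊥ := by
    rcases htop with h | h
    · exact ⟨(d : ℤ), Or.inl rfl, h⟩
    · exact ⟨-(d : ℤ), Or.inr rfl, h⟩
  obtain ⟨y, hyY, hy0⟩ := (Submodule.ne_bot_iff _).mp hYe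
  set s : kˣ := Units.mk0 (2 : k) two_ne_zero with hs
  have hsinj : ∀ a b : ℤ, s ^ a = s ^ b → a = b := by
    intro a b hab
    have h1 : s ^ (a - b) = 1 := by
      rw [zpow_sub, hab]; simp
    have := two_zpow_eq_one' h1
    omega
  set ρ : Y →ₗ[k] Y := (ρY (t s) : Y →ₗ[k] Y) with hρ
  set P : Polynomial k :=
    ∏ j ∈ Finset.Icc (-(d : ℤ)) (d : ℤ),
      (Polynomial.X - Polynomial.C ((s ^ j : kˣ) : k)) with hP
  -- the action of t s on M = TruncTensorAlg ⊗ Y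
  set A : (TruncTensorAlg k X N ⊗[k] Y) →ₗ[k] (TruncTensorAlg k X N ⊗[k] Y) :=
    TensorProduct.map (truncTensorAlgMap ((ρX (t s) : X →ₗ[k] X)) N) ρ with hA
  have hAeq : A = TensorProduct.map LinearMap.id ρ := by
    rw [hA, hXtrivial (t s) (htK' s)]
    congr 1
    rw [Units.val_one]
    show truncTensorAlgMap (LinearMap.id) N = LinearMap.id
    exact truncTensorAlgMap_id' N
  -- P(A) = 0 on M
  have hannM : ∀ m : TruncTensorAlg k X N ⊗[k] Y, (Polynomial.aeval A P) m = 0 := by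
    intro m
    induction m using TensorProduct.induction_on with
    | zero => simp
    | add a b ha hb => rw [map_add, ha, hb, add_zero]
    | tmul u v =>
      have hv : v ∈ ⨆ j, Yw j := by
        rw [hYint.submodule_iSup_eq_top]; trivial
      refine Submodule.iSup_induction Yw
        (motive := fun w => (Polynomial.aeval A P) (u ⊗ₜ[k] w) = 0) hv ?_ (by simp) ?_
      · intro i x hxi
        show (Polynomial.aeval A P) (u ⊗ₜ[k] x) = 0
        by_cases hi : (d : ℤ) < |i|
        · rw [hbound i hi, Submodule.mem_bot] at hxi
          rw [hxi]
          simp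
        · have habs := abs_le.mp (not_lt.mp hi)
          have hmem : i ∈ Finset.Icc (-(d : ℤ)) (d : ℤ) := by
            rw [Finset.mem_Icc]; exact habs
          have heig : A (u ⊗ₜ[k] x) = ((s ^ i : kˣ) : k) • (u ⊗ₜ[k] x) := by
            rw [hAeq, TensorProduct.map_tmul, LinearMap.id_coe, id_eq,
              hwt i x hxi s, TensorProduct.tmul_smul]
          rw [eig_aeval' heig]
          have hz : P.eval ((s ^ i : kˣ) : k) = 0 := by
            rw [hP, Polynomial.eval_prod]
            exact Finset.prod_eq_zero hmem (by simp)
          rw [hz, zero_smul]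
      · intro x z hx hz
        rw [TensorProduct.tmul_add, map_add, hx, hz, add_zero]
  -- restrict A to U
  have hUmem : ∀ x ∈ U, A x ∈ U := fun x hx => hUinv (t s) x hx
  set A' : U →ₗ[k] U := A.restrict hUmem with hA'
  have hcoe : ∀ x : U, (U.subtype) (A' x) = A (U.subtype x) := fun x => rfl
  have hannU : ∀ x : U, (Polynomial.aeval A' P) x = 0 := by
    intro x
    have h2 := semiconj_aeval' hcoe P x
    rw [Submodule.subtype_apply, Submodule.subtype_apply, hannM] at h2
    exact Subtype.ext h2
  set BZ : (Y ⊗[k] Y) →ₗ[k] (Y ⊗[k] Y) := TensorProduct.map ρ ρ with hBZ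
  have hφA : ∀ x : U, φ (A' x) = BZ (φ x) := by
    intro x
    exact hequiv (t s) x (A' x) rfl
  have hannZ : ∀ z : Y ⊗[k] Y, (Polynomial.aeval BZ P) z = 0 := by
    intro z
    obtain ⟨x, rfl⟩ := hφsurj z
    rw [← semiconj_aeval' hφA P x, hannU, map_zero]
  -- the eigenvector y ⊗ y of weight 2e
  have hyeig : ρ y = ((s ^ e : kˣ) : k) • y := hwt e y hyY s
  have hzeig : BZ (y ⊗ₜ[k] y) = ((s ^ (e + e) : kˣ) : k) • (y ⊗ₜ[k] y) := by
    rw [hBZ, TensorProduct.map_tmul, hyeig, TensorProduct.smul_tmul_smul]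
    congr 1
    rw [zpow_add]
    push_cast
    ring
  have hfin := hannZ (y ⊗ₜ[k] y)
  rw [eig_aeval' hzeig] at hfin
  have hne : P.eval ((s ^ (e + e) : kˣ) : k) ≠ 0 := by
    rw [hP, Polynomial.eval_prod]
    refine Finset.prod_ne_zero_iff.mpr fun j hj => ?_
    simp only [Polynomial.eval_sub, Polynomial.eval_X, Polynomial.eval_C, sub_ne_zero]
    intro hcon
    have hu : s ^ (e + e) = s ^ j := Units.ext hcon
    have hej := hsinj _ _ hu
    rw [Finset.mem_Icc] at hj
    rcases hee with rfl | rfl <;> omega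
  have hz0 : y ⊗ₜ[k] y = 0 := by
    rcases smul_eq_zero.mp hfin with h | h
    · exact absurd h hne
    · exact h
  obtain ⟨f, hf⟩ : ∃ f : Module.Dual k Y, f y ≠ 0 := by
    by_contra hcon
    push_neg at hcon
    exact hy0 ((Module.forall_dual_apply_eq_zero_iff k y).mp hcon)
  have hfy := congrArg (LinearMap.mul' k k ∘ₗ TensorProduct.map f f) hz0
  simp only [LinearMap.comp_apply, TensorProduct.map_tmul, LinearMap.mul'_apply,
    map_zero] at hfy
  exact hf (mul_self_eq_zero.mp hfy)
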